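/- Let n ≥ 2 be an integer, A = (a_{i,j})_{1≤i,j≤n} and B = (b_{i,j})_{1≤i,j≤n} n×n matrices over K, and write BA = (c_{i,j})_{1≤i,j≤n}. Let G be the (n−1)×(n−1) matrix with (i,j)-entry a_{i,j}·c_{i,n} − a_{i,n}·c_{i,j}. Then det G = (∑_{f : {1,…,n} → {1,…,n}, f(n)=n, f n-potent} (weight_f B)·(abut_f A)) · det A. -/

import Mathlib

open scoped Classical
open Finset Equiv

theorem Equiv.Perm.apply_inv_self {α : Type*} (f : Perm α) (x : α) : f (f⁻¹ x) = x :=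
  f.apply_symm_apply x

section DetWeightAbut

variable {K : Type*} [CommRing K] {m : ℕ}


def pLift (g : Fin (m+1) → Fin (m+2)) : Fin (m+2) → Fin (m+2) :=
  Fin.lastCases (Fin.last (m+1)) g

def IsPotentG (g : Fin (m+1) → Fin (m+2)) : Prop :=
  ∀ x, ∃ k : ℕ, (pLift g)^[k] x = Fin.last (m+1)

lemma pLift_castSucc (g : Fin (m+1) → Fin (m+2)) (i : Fin (m+1)) :
    pLift g i.castSucc = g i := by simp [pLift]

lemma pLift_last (g : Fin (m+1) → Fin (m+2)) :
    pLift g (Fin.last (m+1)) = Fin.last (m+1) := by simp [pLift]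

def Compat (σ : Perm (Fin (m+1))) (g : Fin (m+1) → Fin (m+2)) : Prop :=
  ∀ i, (σ i = i → g i ≠ i.castSucc) ∧ (σ i ≠ i → g i = (σ i).castSucc)

lemma sum_compat_zero (g : Fin (m+1) → Fin (m+2))
    (hfix : ∀ i, g i ≠ i.castSucc) (hnp : ¬ IsPotentG g) :
    ∑ σ ∈ Finset.univ.filter (fun σ : Perm (Fin (m+1)) => Compat σ g),
      ((Equiv.Perm.sign σ : ℤ) : K) * (-1 : K) ^ σ.support.card = 0 := by
  set G := pLift g with hG
  have hGcs : ∀ i : Fin (m+1), G i.castSucc = g i := fun i => by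
    rw [hG]; exact pLift_castSucc g i
  obtain ⟨x, hx⟩ : ∃ x, ∀ k : ℕ, G^[k] x ≠ Fin.last (m+1) := by
    obtain ⟨x, hx⟩ := not_forall.mp hnp
    exact ⟨x, by push_neg at hx; exact hx⟩
  obtain ⟨k, l, hkl, he⟩ : ∃ k l : ℕ, k < l ∧ G^[k] x = G^[l] x := by
    obtain ⟨k, l, hne, he⟩ := Finite.exists_ne_map_eq_of_infinite (fun k : ℕ => G^[k] x)
    rcases hne.lt_or_gt with h | h
    · exact ⟨k, l, h, he⟩
    · exact ⟨l, k, h, he.symm⟩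
  set y := G^[k] x with hy
  set p := l - k with hp
  have hp0 : 0 < p := Nat.sub_pos_of_lt hkl
  have hyp : G^[p] y = y := by
    rw [hy, ← Function.iterate_add_apply, hp, Nat.sub_add_cancel hkl.le]
    exact he.symm
  have hylast : ∀ r : ℕ, G^[r] y ≠ Fin.last (m+1) := fun r => by
    rw [hy, ← Function.iterate_add_apply]; exact hx _
  -- the orbit of y
  set InZ : Fin (m+1) → Prop := fun i => ∃ r : ℕ, G^[r] y = i.castSucc with hInZ
  have horb : ∀ z : Fin (m+2), (∃ r, G^[r] y = z) → G^[p] z = z := by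
    rintro z ⟨r, rfl⟩
    calc G^[p] (G^[r] y) = G^[p + r] y := (Function.iterate_add_apply G p r y).symm
      _ = G^[r + p] y := by rw [Nat.add_comm p r]
      _ = G^[r] (G^[p] y) := Function.iterate_add_apply G r p y
      _ = G^[r] y := by rw [hyp]
  have hclosed : ∀ z, (∃ r : ℕ, G^[r] y = z) → (∃ r : ℕ, G^[r] y = G z) := by
    rintro z ⟨r, rfl⟩; exact ⟨r+1, Function.iterate_succ_apply' G r y⟩
  have hgZ : ∀ i, InZ i → g i ≠ Fin.last (m+1) := by
    intro i hi
    obtain ⟨r, hr⟩ := hclosed _ hi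
    rw [hGcs] at hr
    rw [← hr]; exact hylast r
  set cf : Fin (m+1) → Fin (m+1) :=
    fun i => if h : InZ i then (g i).castPred (hgZ i h) else i with hcf
  have hcf_in : ∀ i (h : InZ i), (cf i).castSucc = g i := fun i h => by
    simp only [hcf, dif_pos h, Fin.castSucc_castPred]
  have hcf_out : ∀ i, ¬ InZ i → cf i = i := fun i h => by simp only [hcf, dif_neg h]
  have hcfZ : ∀ i, InZ i → InZ (cf i) := by
    intro i h
    obtain ⟨r, hr⟩ := hclosed _ h
    exact ⟨r, by rw [hr, hGcs, ← hcf_in i h]⟩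
  have hrec : ∀ a : Fin (m+1), InZ a → G^[p-1] (g a) = a.castSucc := by
    intro a ha
    calc G^[p-1] (g a) = G^[p-1] (G a.castSucc) := by rw [hGcs]
      _ = G^[(p-1)+1] a.castSucc := (Function.iterate_succ_apply G (p-1) _).symm
      _ = G^[p] a.castSucc := by rw [Nat.sub_add_cancel hp0]
      _ = a.castSucc := horb _ ha
  have hinj : Function.Injective cf := by
    intro i j hij
    by_cases hi : InZ i <;> by_cases hj : InZ j
    · have h1 : g i = g j := by rw [← hcf_in i hi, ← hcf_in j hj, hij]
      have := (hrec i hi).symm.trans (by rw [h1, hrec j hj])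
      exact Fin.castSucc_injective _ this
    · exact absurd (hij ▸ hcfZ i hi) (by rw [hcf_out j hj]; exact hj)
    · exact absurd (hij.symm ▸ hcfZ j hj) (by rw [hcf_out i hi]; exact hi)
    · rw [hcf_out i hi, hcf_out j hj] at hij; exact hij
  set c : Perm (Fin (m+1)) := Equiv.ofBijective cf
    (Finite.injective_iff_bijective.mp hinj) with hc
  have hc_apply : ∀ i, c i = cf i := fun i => rfl
  have hcsupp : ∀ i, c i ≠ i ↔ InZ i := by
    intro i
    constructor
    · intro h
      by_contra h'
      exact h ((hc_apply i).trans (hcf_out i h'))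
    · intro h hci
      exact hfix i (by rw [← hcf_in i h, ← hc_apply, hci])
  have hyne : y ≠ Fin.last (m+1) := by
    have := hylast 0; simpa using this
  set y₀ := y.castPred hyne with hy₀def
  have hy₀ : y₀.castSucc = y := Fin.castSucc_castPred y hyne
  have hy₀Z : InZ y₀ := ⟨0, by simpa using hy₀.symm⟩
  have htrack : ∀ r : ℕ, (c^[r] y₀).castSucc = G^[r] y := by
    intro r
    induction r with
    | zero => simpa using hy₀
    | succ n ih =>
      have hmem : InZ (c^[n] y₀) := ⟨n, ih.symm⟩
      rw [Function.iterate_succ_apply', Function.iterate_succ_apply']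
      rw [hc_apply, hcf_in _ hmem, ← ih]
      exact (hGcs _).symm
  have hcyc : c.IsCycle := by
    refine ⟨y₀, (hcsupp y₀).mpr hy₀Z, ?_⟩
    intro w hw
    obtain ⟨r, hr⟩ := (hcsupp w).mp hw
    refine ⟨(r : ℤ), ?_⟩
    have h1 : c^[r] y₀ = w := Fin.castSucc_injective _ (by rw [htrack r, hr])
    rw [zpow_natCast, ← h1]
    exact (congrFun (Equiv.Perm.iterate_eq_pow c r) y₀).symm
  have hsuppc : c.support = Finset.univ.filter InZ := by
    ext i; simp [Equiv.Perm.mem_support, hcsupp i]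
  set ZF := Finset.univ.filter InZ with hZF
  have hsignc : Equiv.Perm.sign c = -(-1) ^ ZF.card := by
    rw [← hsuppc]; exact hcyc.sign
  have hcne : c ≠ 1 := by
    intro h
    exact ((hcsupp y₀).mpr hy₀Z) (by rw [h]; rfl)
  have hcinv_out : ∀ i, ¬ InZ i → c⁻¹ i = i := by
    intro i h
    by_cases h2 : InZ (c⁻¹ i)
    · exfalso
      have h3 := hcfZ _ h2
      rw [← hc_apply, Equiv.Perm.apply_inv_self] at h3
      exact h h3
    · have h3 : c (c⁻¹ i) = c⁻¹ i := (hc_apply (c⁻¹ i)).trans (hcf_out _ h2)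
      rw [Equiv.Perm.apply_inv_self c i] at h3
      exact h3.symm
  have hcinv_in : ∀ i, InZ i → InZ (c⁻¹ i) := by
    intro i h
    by_contra h2
    have h3 : c (c⁻¹ i) = c⁻¹ i := (hc_apply (c⁻¹ i)).trans (hcf_out _ h2)
    rw [Equiv.Perm.apply_inv_self c i] at h3
    rw [← h3] at h2
    exact h2 h
  -- dichotomy: for compatible σ the orbit is inside or outside the support
  have hdich : ∀ σ : Perm (Fin (m+1)), Compat σ g →
      (∀ i, InZ i → i ∈ σ.support) ∨ (∀ i, InZ i → i ∉ σ.support) := by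
    intro σ hσ
    by_cases hex : ∃ i, InZ i ∧ i ∈ σ.support
    · left
      obtain ⟨i, hiZ, his⟩ := hex
      have hstep : ∀ r : ℕ, ∃ j, j ∈ σ.support ∧ G^[r] i.castSucc = j.castSucc := by
        intro r
        induction r with
        | zero => exact ⟨i, his, by simp⟩
        | succ n ih =>
          obtain ⟨j, hjs, hje⟩ := ih
          have hjmove : σ j ≠ j := Equiv.Perm.mem_support.mp hjs
          have hgj : g j = (σ j).castSucc := (hσ j).2 hjmove
          refine ⟨σ j, Equiv.Perm.apply_mem_support.mpr hjs, ?_⟩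
          rw [Function.iterate_succ_apply', hje, hGcs, hgj]
      intro w hwZ
      obtain ⟨r, hr⟩ := hiZ
      obtain ⟨s, hs⟩ := hwZ
      have hmulfix : ∀ T : ℕ, (G^[p])^[T] y = y := by
        intro T
        induction T with
        | zero => rfl
        | succ n ih => rw [Function.iterate_succ_apply', ih, hyp]
      have hmul : G^[p * (r+1)] y = y := by
        rw [Function.iterate_mul]; exact hmulfix _
      have hrle : r ≤ p * (r+1) := by
        have h1 : 1 * (r+1) ≤ p * (r+1) := Nat.mul_le_mul_right _ hp0
        omega
      have hback : G^[p * (r+1) - r] i.castSucc = y := by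
        rw [← hr, ← Function.iterate_add_apply, Nat.sub_add_cancel hrle]
        exact hmul
      have hreach : G^[s + (p * (r+1) - r)] i.castSucc = w.castSucc := by
        rw [Function.iterate_add_apply, hback, hs]
      obtain ⟨j, hjs, hje⟩ := hstep (s + (p * (r+1) - r))
      have hwj : w = j := Fin.castSucc_injective _ (by rw [← hje, hreach])
      rw [hwj]; exact hjs
    · right
      intro i hiZ his
      exact hex ⟨i, hiZ, his⟩
  have hagree : ∀ σ, Compat σ g → (∀ i, InZ i → i ∈ σ.support) →
      ∀ i, InZ i → σ i = c i := by
    intro σ hσ hsub i hiZ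
    have h1 : g i = (σ i).castSucc := (hσ i).2 (Equiv.Perm.mem_support.mp (hsub i hiZ))
    apply Fin.castSucc_injective
    rw [← h1, hc_apply, hcf_in i hiZ]
  have hdisj : ∀ σ : Perm (Fin (m+1)), (∀ i, InZ i → i ∉ σ.support) →
      σ.Disjoint c := by
    intro σ hout x
    by_cases hx2 : InZ x
    · left
      by_contra h
      exact hout x hx2 (Equiv.Perm.mem_support.mpr h)
    · right
      exact (hc_apply x).trans (hcf_out x hx2)
  have hZsub : ∀ σ : Perm (Fin (m+1)), (∀ i, InZ i → i ∉ σ.support) →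
      ∀ i, InZ i → i ∈ (σ * c).support := by
    intro σ hout i hiZ
    rw [(hdisj σ hout).support_mul]
    refine Finset.mem_union_right _ ?_
    rw [hsuppc, hZF]
    exact Finset.mem_filter.mpr ⟨Finset.mem_univ i, hiZ⟩
  have hcompat_mul : ∀ σ, Compat σ g → (∀ i, InZ i → i ∉ σ.support) →
      Compat (σ * c) g := by
    intro σ hσ hout i
    refine ⟨fun _ => hfix i, fun hne => ?_⟩
    by_cases hiZ : InZ i
    · have h1 : InZ (c i) := by rw [hc_apply]; exact hcfZ i hiZ
      have h2 : σ (c i) = c i := by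
        by_contra h
        exact hout _ h1 (Equiv.Perm.mem_support.mpr h)
      have h3 : (σ * c) i = c i := by rw [Equiv.Perm.mul_apply, h2]
      rw [h3, hc_apply, hcf_in i hiZ]
    · have h3 : (σ * c) i = σ i := by
        rw [Equiv.Perm.mul_apply, (hc_apply i).trans (hcf_out i hiZ)]
      rw [h3]
      exact (hσ i).2 (by rwa [h3] at hne)
  have hτfix : ∀ σ : Perm (Fin (m+1)), Compat σ g → (∀ i, InZ i → i ∈ σ.support) →
      ∀ i, InZ i → (σ * c⁻¹) i = i := by
    intro σ hσ hsub i hiZ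
    have h1 : InZ (c⁻¹ i) := hcinv_in i hiZ
    have h2 : σ (c⁻¹ i) = c (c⁻¹ i) := hagree σ hσ hsub _ h1
    rw [Equiv.Perm.mul_apply, h2, Equiv.Perm.apply_inv_self]
  have hτapply : ∀ σ : Perm (Fin (m+1)), ∀ i, ¬ InZ i → (σ * c⁻¹) i = σ i := by
    intro σ i hiZ
    rw [Equiv.Perm.mul_apply, hcinv_out i hiZ]
  have hcompat_τ : ∀ σ, Compat σ g → (∀ i, InZ i → i ∈ σ.support) →
      Compat (σ * c⁻¹) g := by
    intro σ hσ hsub i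
    refine ⟨fun _ => hfix i, fun hne => ?_⟩
    by_cases hiZ : InZ i
    · exact absurd (hτfix σ hσ hsub i hiZ) hne
    · rw [hτapply σ i hiZ]
      exact (hσ i).2 (by rw [← hτapply σ i hiZ]; exact hne)
  have hτout : ∀ σ, Compat σ g → (∀ i, InZ i → i ∈ σ.support) →
      ∀ i, InZ i → i ∉ (σ * c⁻¹).support := by
    intro σ hσ hsub i hiZ hmem
    exact (Equiv.Perm.mem_support.mp hmem) (hτfix σ hσ hsub i hiZ)
  have hpow1 : ∀ z : ℕ, (-1 : K)^z * (-1:K)^z = 1 := by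
    intro z; rw [← pow_add, ← two_mul, pow_mul]; norm_num
  have hflip : ∀ σ : Perm (Fin (m+1)), σ.Disjoint c →
      ((Equiv.Perm.sign (σ * c) : ℤ) : K) * (-1:K) ^ (σ * c).support.card
        = -(((Equiv.Perm.sign σ : ℤ) : K) * (-1:K) ^ σ.support.card) := by
    intro σ hd
    have hds := Equiv.Perm.disjoint_iff_disjoint_support.mp hd
    rw [hsuppc] at hds
    rw [hd.support_mul, hsuppc, Finset.card_union_of_disjoint hds,
      Equiv.Perm.sign_mul, hsignc]
    push_cast
    rw [pow_add]
    linear_combination (-(((Equiv.Perm.sign σ : ℤ) : K) * (-1:K) ^ σ.support.card)) *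
      hpow1 ZF.card
  -- the involution
  refine Finset.sum_involution
    (fun σ _ => if ∀ i, InZ i → i ∈ σ.support then σ * c⁻¹ else σ * c)
    ?_ ?_ ?_ ?_
  · intro σ hσ
    have hσc : Compat σ g := (Finset.mem_filter.mp hσ).2
    by_cases hb : ∀ i, InZ i → i ∈ σ.support
    · simp only [if_pos hb]
      have hout := hτout σ hσc hb
      have hd := hdisj _ hout
      have hback : (σ * c⁻¹) * c = σ := by group
      have hfl := hflip (σ * c⁻¹) hd
      rw [hback] at hfl
      rw [hfl]; ring
    · simp only [if_neg hb]
      have hout : ∀ i, InZ i → i ∉ σ.support := (hdich σ hσc).resolve_left hb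
      rw [hflip σ (hdisj σ hout)]; ring
  · intro σ hσ _
    by_cases hb : ∀ i, InZ i → i ∈ σ.support
    · simp only [if_pos hb]
      intro hcontra
      have : c⁻¹ = 1 := mul_left_cancel (a := σ) (by rw [hcontra, mul_one])
      exact hcne (inv_eq_one.mp this)
    · simp only [if_neg hb]
      intro hcontra
      have : c = 1 := mul_left_cancel (a := σ) (by rw [hcontra, mul_one])
      exact hcne this
  · intro σ hσ
    have hσc : Compat σ g := (Finset.mem_filter.mp hσ).2
    by_cases hb : ∀ i, InZ i → i ∈ σ.support
    · simp only [if_pos hb]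
      exact Finset.mem_filter.mpr ⟨Finset.mem_univ _, hcompat_τ σ hσc hb⟩
    · simp only [if_neg hb]
      have hout : ∀ i, InZ i → i ∉ σ.support := (hdich σ hσc).resolve_left hb
      exact Finset.mem_filter.mpr ⟨Finset.mem_univ _, hcompat_mul σ hσc hout⟩
  · intro σ hσ
    have hσc : Compat σ g := (Finset.mem_filter.mp hσ).2
    by_cases hb : ∀ i, InZ i → i ∈ σ.support
    · simp only [if_pos hb]
      have hnot : ¬ (∀ i, InZ i → i ∈ (σ * c⁻¹).support) := fun hall =>
        hτout σ hσc hb y₀ hy₀Z (hall y₀ hy₀Z)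
      simp only [if_neg hnot]
      group
    · simp only [if_neg hb]
      have hout : ∀ i, InZ i → i ∉ σ.support := (hdich σ hσc).resolve_left hb
      have hyes : ∀ i, InZ i → i ∈ (σ * c).support := hZsub σ hout
      simp only [if_pos hyes]
      group

lemma potent_fixfree (g : Fin (m+1) → Fin (m+2)) (hg : IsPotentG g) (i : Fin (m+1)) :
    g i ≠ i.castSucc := by
  intro h
  have hall : ∀ k : ℕ, (pLift g)^[k] i.castSucc = i.castSucc := by
    intro k
    induction k with
    | zero => rfl
    | succ n ih => rw [Function.iterate_succ_apply', ih, pLift_castSucc, h]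
  obtain ⟨k, hk⟩ := hg i.castSucc
  rw [hall k] at hk
  exact (Fin.castSucc_lt_last i).ne hk

lemma compat_potent_eq_one (g : Fin (m+1) → Fin (m+2)) (hg : IsPotentG g)
    (σ : Perm (Fin (m+1))) (hσ : Compat σ g) : σ = 1 := by
  by_contra h
  have hex : ∃ i, σ i ≠ i := by
    by_contra h2
    push_neg at h2
    exact h (Equiv.ext h2)
  obtain ⟨i, hi⟩ := hex
  have hstep : ∀ k : ℕ, ∃ j, σ j ≠ j ∧ (pLift g)^[k] i.castSucc = j.castSucc := by
    intro k
    induction k with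
    | zero => exact ⟨i, hi, rfl⟩
    | succ n ih =>
      obtain ⟨j, hjne, hje⟩ := ih
      have hgj : g j = (σ j).castSucc := (hσ j).2 hjne
      have hmove : σ (σ j) ≠ σ j := fun hc => hjne (σ.injective hc)
      exact ⟨σ j, hmove, by rw [Function.iterate_succ_apply', hje, pLift_castSucc, hgj]⟩
  obtain ⟨k, hk⟩ := hg i.castSucc
  obtain ⟨j, _, hje⟩ := hstep k
  rw [hk] at hje
  exact (Fin.castSucc_lt_last j).ne hje.symm

lemma inner_eval (g : Fin (m+1) → Fin (m+2)) :
    (∑ σ ∈ Finset.univ.filter (fun σ : Perm (Fin (m+1)) => Compat σ g),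
      ((Equiv.Perm.sign σ : ℤ) : K) * (-1 : K) ^ σ.support.card)
    = if IsPotentG g then 1 else 0 := by
  by_cases hg : IsPotentG g
  · rw [if_pos hg]
    have hfil : Finset.univ.filter (fun σ : Perm (Fin (m+1)) => Compat σ g) = {1} := by
      ext σ
      simp only [Finset.mem_filter, Finset.mem_univ, true_and, Finset.mem_singleton]
      constructor
      · exact compat_potent_eq_one g hg σ
      · rintro rfl
        exact fun i => ⟨fun _ => potent_fixfree g hg i, fun h => absurd rfl h⟩
    rw [hfil, Finset.sum_singleton]
    simp
  · rw [if_neg hg]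
    by_cases hfix : ∀ i, g i ≠ i.castSucc
    · exact sum_compat_zero g hfix hg
    · push_neg at hfix
      obtain ⟨i, hi⟩ := hfix
      have hfil : Finset.univ.filter (fun σ : Perm (Fin (m+1)) => Compat σ g) = ∅ := by
        apply Finset.filter_eq_empty_iff.mpr
        intro σ _ hσ
        by_cases hc : σ i = i
        · exact (hσ i).1 hc hi
        · have := (hσ i).2 hc
          rw [hi] at this
          exact hc (Fin.castSucc_injective _ this.symm)
      rw [hfil, Finset.sum_empty]

lemma weightFactor (α : Fin (m+2) → K) (β : Fin (m+1) → Fin (m+2) → K)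
    (σ : Perm (Fin (m+1))) (g : Fin (m+1) → Fin (m+2)) (h : Compat σ g) :
    (∏ i, if σ i = i then β i (g i) * α (g i) else -(α i.castSucc * β i (g i)))
      = (-1 : K) ^ σ.support.card * ∏ i, β i (g i) * α (g i) := by
  have hsupp : (Finset.univ.filter fun i => ¬ σ i = i) = σ.support := by
    ext i; simp [Equiv.Perm.mem_support]
  have e0 := Finset.prod_filter_mul_prod_filter_not Finset.univ (fun i => σ i = i)
    (fun i => if σ i = i then β i (g i) * α (g i) else -(α i.castSucc * β i (g i)))
  rw [← e0, hsupp]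
  have h1 : (∏ i ∈ Finset.univ.filter (fun i => σ i = i),
      if σ i = i then β i (g i) * α (g i) else -(α i.castSucc * β i (g i)))
        = ∏ i ∈ Finset.univ.filter (fun i => σ i = i), β i (g i) * α (g i) :=
    Finset.prod_congr rfl (fun i hi => if_pos (Finset.mem_filter.mp hi).2)
  have key : ∏ i ∈ σ.support, α i.castSucc = ∏ i ∈ σ.support, α (g i) := by
    have hc : ∀ i ∈ σ.support, α (g i) = α (σ i).castSucc := fun i hi => by
      rw [(h i).2 (Equiv.Perm.mem_support.mp hi)]
    rw [Finset.prod_congr rfl hc]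
    exact (Finset.prod_bij' (fun i _ => σ i) (fun i _ => σ⁻¹ i)
      (fun i hi => Equiv.Perm.apply_mem_support.mpr hi)
      (fun i hi => Equiv.Perm.mem_support.mpr (by
        simp only [Equiv.Perm.apply_inv_self]
        exact fun hc => Equiv.Perm.mem_support.mp hi
          (by rw [hc, Equiv.Perm.apply_inv_self]; exact hc)))
      (fun i _ => by simp) (fun i _ => by simp) (fun i _ => rfl)).symm
  have h2 : (∏ i ∈ σ.support,
      if σ i = i then β i (g i) * α (g i) else -(α i.castSucc * β i (g i)))
        = (-1 : K) ^ σ.support.card * ∏ i ∈ σ.support, β i (g i) * α (g i) := by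
    have : ∀ i ∈ σ.support,
        (if σ i = i then β i (g i) * α (g i) else -(α i.castSucc * β i (g i)))
          = (-1 : K) * (α i.castSucc * β i (g i)) := by
      intro i hi
      rw [if_neg (Equiv.Perm.mem_support.mp hi)]; ring
    rw [Finset.prod_congr rfl this, Finset.prod_mul_distrib, Finset.prod_const,
      Finset.prod_mul_distrib, key]
    rw [Finset.prod_mul_distrib]
    ring
  rw [h1, h2]
  have e1 := Finset.prod_filter_mul_prod_filter_not Finset.univ (fun i => σ i = i)
    (fun i => β i (g i) * α (g i))
  rw [← e1, hsupp]
  ring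

lemma core_det (α : Fin (m+2) → K) (β : Fin (m+1) → Fin (m+2) → K) :
    (Matrix.of fun i k : Fin (m+1) =>
      if k = i then ∑ j ∈ Finset.univ.filter (· ≠ i.castSucc), β i j * α j
      else -(α i.castSucc * β i k.castSucc)).det
    = ∑ g ∈ Finset.univ.filter (fun g : Fin (m+1) → Fin (m+2) => IsPotentG g),
        ∏ i, β i (g i) * α (g i) := by
  rw [← Matrix.det_transpose, Matrix.det_apply']
  simp only [Matrix.transpose_apply, Matrix.of_apply]
  have h2 : ∀ σ : Perm (Fin (m+1)),
      (∏ i, if σ i = i then ∑ j ∈ Finset.univ.filter (· ≠ i.castSucc), β i j * α j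
        else -(α i.castSucc * β i (σ i).castSucc))
      = ∑ g ∈ Finset.univ.filter (fun g => Compat σ g),
          ∏ i, (if σ i = i then β i (g i) * α (g i)
            else -(α i.castSucc * β i (g i))) := by
    intro σ
    have hT : ∀ i, (if σ i = i then ∑ j ∈ Finset.univ.filter (· ≠ i.castSucc), β i j * α j
        else -(α i.castSucc * β i (σ i).castSucc))
        = ∑ j ∈ (if σ i = i then Finset.univ.filter (· ≠ i.castSucc)
            else {(σ i).castSucc}),
            (if σ i = i then β i j * α j else -(α i.castSucc * β i j)) := by
      intro i
      by_cases h : σ i = i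
      · simp only [if_pos h]
      · simp only [if_neg h, Finset.sum_singleton]
    rw [Finset.prod_congr rfl (fun i _ => hT i), Finset.prod_univ_sum]
    have hpi : Fintype.piFinset (fun i => (if σ i = i then Finset.univ.filter (· ≠ i.castSucc)
        else {(σ i).castSucc})) = Finset.univ.filter (fun g => Compat σ g) := by
      ext g
      simp only [Fintype.mem_piFinset, Finset.mem_filter, Finset.mem_univ, true_and]
      constructor
      · intro h i
        have hi := h i
        by_cases hc : σ i = i
        · rw [if_pos hc] at hi
          simp only [Finset.mem_filter] at hi
          exact ⟨fun _ => hi.2, fun hne => absurd hc hne⟩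
        · rw [if_neg hc] at hi
          simp only [Finset.mem_singleton] at hi
          exact ⟨fun he => absurd he hc, fun _ => hi⟩
      · intro h i
        by_cases hc : σ i = i
        · rw [if_pos hc]
          simp only [Finset.mem_filter, Finset.mem_univ, true_and]
          exact (h i).1 hc
        · rw [if_neg hc]
          simp only [Finset.mem_singleton]
          exact (h i).2 hc
    rw [hpi]
  calc (∑ σ : Perm (Fin (m+1)), ((Equiv.Perm.sign σ : ℤ) : K) *
        ∏ i, (if σ i = i then ∑ j ∈ Finset.univ.filter (· ≠ i.castSucc), β i j * α j
          else -(α i.castSucc * β i (σ i).castSucc)))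
      = ∑ σ : Perm (Fin (m+1)), ∑ g ∈ Finset.univ.filter (fun g => Compat σ g),
          ((Equiv.Perm.sign σ : ℤ) : K) *
            ∏ i, (if σ i = i then β i (g i) * α (g i)
              else -(α i.castSucc * β i (g i))) := by
        refine Finset.sum_congr rfl fun σ _ => ?_
        rw [h2 σ, Finset.mul_sum]
    _ = ∑ σ : Perm (Fin (m+1)), ∑ g : Fin (m+1) → Fin (m+2),
          (if Compat σ g then ((Equiv.Perm.sign σ : ℤ) : K) *
            ∏ i, (if σ i = i then β i (g i) * α (g i)
              else -(α i.castSucc * β i (g i))) else 0) := by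
        exact Finset.sum_congr rfl fun σ _ => Finset.sum_filter _ _
    _ = ∑ g : Fin (m+1) → Fin (m+2), ∑ σ : Perm (Fin (m+1)),
          (if Compat σ g then ((Equiv.Perm.sign σ : ℤ) : K) *
            ∏ i, (if σ i = i then β i (g i) * α (g i)
              else -(α i.castSucc * β i (g i))) else 0) := Finset.sum_comm
    _ = ∑ g : Fin (m+1) → Fin (m+2),
          ∑ σ ∈ Finset.univ.filter (fun σ : Perm (Fin (m+1)) => Compat σ g),
          ((Equiv.Perm.sign σ : ℤ) : K) *
            ∏ i, (if σ i = i then β i (g i) * α (g i)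
              else -(α i.castSucc * β i (g i))) := by
        exact Finset.sum_congr rfl fun g _ => (Finset.sum_filter _ _).symm
    _ = ∑ g : Fin (m+1) → Fin (m+2),
          (∏ i, β i (g i) * α (g i)) *
          ∑ σ ∈ Finset.univ.filter (fun σ : Perm (Fin (m+1)) => Compat σ g),
            ((Equiv.Perm.sign σ : ℤ) : K) * (-1 : K) ^ σ.support.card := by
        refine Finset.sum_congr rfl fun g _ => ?_
        rw [Finset.mul_sum]
        refine Finset.sum_congr rfl fun σ hσ => ?_
        rw [weightFactor α β σ g (Finset.mem_filter.mp hσ).2]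
        ring
    _ = ∑ g : Fin (m+1) → Fin (m+2),
          (∏ i, β i (g i) * α (g i)) * (if IsPotentG g then (1:K) else 0) := by
        refine Finset.sum_congr rfl fun g _ => ?_
        rw [inner_eval g]
    _ = ∑ g ∈ Finset.univ.filter (fun g : Fin (m+1) → Fin (m+2) => IsPotentG g),
        ∏ i, β i (g i) * α (g i) := by
        rw [Finset.sum_filter]
        exact Finset.sum_congr rfl fun g _ => by
          by_cases h : IsPotentG g <;> simp [h]

-- blocks
lemma bridge (A B : Matrix (Fin (m+2)) (Fin (m+2)) K) :
    A (Fin.last (m+1)) (Fin.last (m+1)) * (Matrix.of fun i j : Fin (m+1) =>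
        A i.castSucc j.castSucc * (B * A) i.castSucc (Fin.last (m + 1)) -
          A i.castSucc (Fin.last (m + 1)) * (B * A) i.castSucc j.castSucc).det
    = (Matrix.of fun i k : Fin (m+1) =>
        (B * A) i.castSucc (Fin.last (m+1)) * (if k = i then 1 else 0)
          - A i.castSucc (Fin.last (m+1)) * B i.castSucc k.castSucc).det * A.det := by
  set n := m + 1
  set lst := Fin.last n
  set e : Fin n ⊕ Fin 1 ≃ Fin (n+1) := finSumFinEquiv
  have he1 : ∀ i : Fin n, e (Sum.inl i) = i.castSucc := fun i => rfl
  have he2 : e (Sum.inr 0) = lst := by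
    apply Fin.ext; simp [e, lst, Fin.natAdd]
  set G := Matrix.of fun i j : Fin n =>
      A i.castSucc j.castSucc * (B * A) i.castSucc lst -
        A i.castSucc lst * (B * A) i.castSucc j.castSucc with hGdef
  set P0 := Matrix.of fun i k : Fin n =>
      (B * A) i.castSucc lst * (if k = i then 1 else 0)
        - A i.castSucc lst * B i.castSucc k.castSucc with hP0def
  set Cb : Matrix (Fin n) (Fin 1) K := Matrix.of fun i _ =>
      - (A i.castSucc lst * B i.castSucc lst) with hCbdef
  set L' : Matrix (Fin n ⊕ Fin 1) (Fin n ⊕ Fin 1) K :=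
      Matrix.fromBlocks P0 Cb 0 1 with hL'def
  set M' : Matrix (Fin n ⊕ Fin 1) (Fin n ⊕ Fin 1) K :=
      Matrix.fromBlocks G 0 (Matrix.of fun _ j => A lst j.castSucc)
        (Matrix.of fun _ _ => A lst lst) with hM'def
  set A' := A.submatrix e e with hA'def
  have hmul : L' * A' = M' := by
    ext x y
    rw [Matrix.mul_apply]
    rw [Fintype.sum_sum_type]
    cases x with
    | inl i =>
      cases y with
      | inl j =>
        simp only [hL'def, hM'def, hA'def, Matrix.fromBlocks_apply₁₁,
          Matrix.fromBlocks_apply₁₂, Matrix.submatrix_apply, he1, he2,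
          Matrix.of_apply, hP0def, hCbdef, hGdef, Fin.sum_univ_one]
        rw [Matrix.mul_apply, Matrix.mul_apply]
        rw [Fin.sum_univ_castSucc (f := fun a => B i.castSucc a * A a lst)]
        rw [Fin.sum_univ_castSucc (f := fun a => B i.castSucc a * A a j.castSucc)]
        simp only [sub_mul, Finset.sum_sub_distrib, mul_ite, ite_mul, one_mul, mul_one,
          zero_mul, mul_zero, Finset.sum_ite_eq', Finset.mem_univ, if_true]
        have key : ∀ w : Fin (n+1),
            ∑ x : Fin n, A i.castSucc lst * B i.castSucc x.castSucc * A x.castSucc w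
              = A i.castSucc lst * ∑ x : Fin n, B i.castSucc x.castSucc * A x.castSucc w := by
          intro w
          rw [Finset.mul_sum]
          exact Finset.sum_congr rfl fun x _ => by ring
        rw [key]
        ring
      | inr z =>
        simp only [hL'def, hM'def, hA'def, Matrix.fromBlocks_apply₁₁,
          Matrix.fromBlocks_apply₁₂, Matrix.submatrix_apply, he1, he2,
          Matrix.of_apply, hP0def, hCbdef, Fin.sum_univ_one, Matrix.zero_apply]
        have hz : z = 0 := Subsingleton.elim z 0
        subst hz
        simp only [he2]
        rw [Matrix.mul_apply,
          Fin.sum_univ_castSucc (f := fun a => B i.castSucc a * A a lst)]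
        simp only [sub_mul, Finset.sum_sub_distrib, mul_ite, ite_mul, one_mul, mul_one,
          zero_mul, mul_zero, Finset.sum_ite_eq', Finset.mem_univ, if_true]
        have key : ∀ w : Fin (n+1),
            ∑ x : Fin n, A i.castSucc lst * B i.castSucc x.castSucc * A x.castSucc w
              = A i.castSucc lst * ∑ x : Fin n, B i.castSucc x.castSucc * A x.castSucc w := by
          intro w
          rw [Finset.mul_sum]
          exact Finset.sum_congr rfl fun x _ => by ring
        rw [key]
        ring
    | inr z =>
      have hz : z = 0 := Subsingleton.elim z 0
      subst hz
      cases y with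
      | inl j =>
        simp [hL'def, hM'def, hA'def, Matrix.fromBlocks_apply₂₁,
          Matrix.fromBlocks_apply₂₂, Matrix.submatrix_apply, he1, he2,
          Matrix.one_apply]
      | inr z' =>
        have hz' : z' = 0 := Subsingleton.elim z' 0
        subst hz'
        simp [hL'def, hM'def, hA'def, Matrix.fromBlocks_apply₂₁,
          Matrix.fromBlocks_apply₂₂, Matrix.submatrix_apply, he1, he2,
          Matrix.one_apply]
  have hdetM : M'.det = G.det * A lst lst := by
    rw [hM'def, Matrix.det_fromBlocks_zero₁₂]
    congr 1
    exact Matrix.det_fin_one _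
  have hdetL : L'.det = P0.det := by
    rw [hL'def, Matrix.det_fromBlocks_zero₂₁, Matrix.det_one, mul_one]
  have hdetA' : A'.det = A.det := Matrix.det_submatrix_equiv_self e A
  calc A lst lst * G.det = G.det * A lst lst := mul_comm _ _
    _ = M'.det := hdetM.symm
    _ = (L' * A').det := by rw [hmul]
    _ = L'.det * A'.det := Matrix.det_mul _ _
    _ = P0.det * A.det := by rw [hdetL, hdetA']

-- P0 = P (filter form)
lemma P0_eq_P (A B : Matrix (Fin (m+2)) (Fin (m+2)) K) :
    (Matrix.of fun i k : Fin (m+1) =>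
        (B * A) i.castSucc (Fin.last (m+1)) * (if k = i then 1 else 0)
          - A i.castSucc (Fin.last (m+1)) * B i.castSucc k.castSucc)
    = (Matrix.of fun i k : Fin (m+1) =>
        if k = i then ∑ j ∈ Finset.univ.filter (· ≠ i.castSucc),
            B i.castSucc j * A j (Fin.last (m+1))
        else -(A i.castSucc (Fin.last (m+1)) * B i.castSucc k.castSucc)) := by
  ext i k
  simp only [Matrix.of_apply]
  by_cases h : k = i
  · subst h
    rw [if_pos rfl, if_pos rfl, mul_one, Matrix.mul_apply]
    rw [Finset.filter_ne']
    have := Finset.sum_erase_add Finset.univ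
      (fun j => B k.castSucc j * A j (Fin.last (m+1))) (Finset.mem_univ k.castSucc)
    have h2 : ∑ j ∈ Finset.univ.erase k.castSucc, B k.castSucc j * A j (Fin.last (m+1))
        = (∑ j, B k.castSucc j * A j (Fin.last (m+1)))
          - B k.castSucc k.castSucc * A k.castSucc (Fin.last (m+1)) := by
      rw [← this]; ring
    rw [h2]; ring
  · rw [if_neg h, if_neg h, mul_zero]; ring

-- potent maps hit last at least once from below
lemma potent_exists_hit (f : Fin (m+2) → Fin (m+2))
    (hpot : ∀ i, ∃ k : ℕ, f^[k] i = Fin.last (m+1)) :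
    ∃ w : Fin (m+1), f w.castSucc = Fin.last (m+1) := by
  have h0 : ((0 : Fin (m+1)).castSucc : Fin (m+2)) ≠ Fin.last (m+1) :=
    (Fin.castSucc_lt_last _).ne
  have hex := hpot (0 : Fin (m+1)).castSucc
  classical
  let k := Nat.find hex
  have hk : f^[k] (0 : Fin (m+1)).castSucc = Fin.last (m+1) := Nat.find_spec hex
  have hkpos : k ≠ 0 := by
    intro h
    rw [h] at hk
    exact h0 hk
  have hlt : f^[k-1] (0 : Fin (m+1)).castSucc ≠ Fin.last (m+1) :=
    Nat.find_min hex (by omega)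
  obtain ⟨w, hw⟩ := Fin.eq_castSucc_of_ne_last hlt
  refine ⟨w, ?_⟩
  rw [hw]
  calc f (f^[k-1] (0 : Fin (m+1)).castSucc)
      = f^[(k-1)+1] (0 : Fin (m+1)).castSucc := (Function.iterate_succ_apply' f _ _).symm
    _ = f^[k] (0 : Fin (m+1)).castSucc := by congr 1; omega
    _ = Fin.last (m+1) := hk

-- the abut algebra per potent f
lemma abut_algebra (A B : Matrix (Fin (m+2)) (Fin (m+2)) K)
    (f : Fin (m+2) → Fin (m+2)) (hlast : f (Fin.last (m+1)) = Fin.last (m+1))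
    (hpot : ∀ i, ∃ k : ℕ, f^[k] i = Fin.last (m+1)) :
    (∏ i : Fin (m+1), B i.castSucc (f i.castSucc) * A (f i.castSucc) (Fin.last (m+1)))
    = A (Fin.last (m+1)) (Fin.last (m+1)) *
      ((∏ i : Fin (m+1), B i.castSucc (f i.castSucc)) *
        (A (Fin.last (m+1)) (Fin.last (m+1)) ^
            ((Finset.univ.filter fun i => f i = Fin.last (m+1)).card - 2) *
          ∏ i ∈ Finset.univ.filter
              (fun i : Fin (m+1) => f i.castSucc ≠ Fin.last (m+1)),
            A (f i.castSucc) (Fin.last (m+1)))) := by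
  set lst := Fin.last (m+1)
  set kc := (Finset.univ.filter fun i : Fin (m+1) => f i.castSucc = lst).card with hkc
  -- total count
  have hcount : (Finset.univ.filter fun i : Fin (m+2) => f i = lst).card = kc + 1 := by
    rw [Finset.card_filter, Fin.sum_univ_castSucc, if_pos hlast, hkc, Finset.card_filter]
  have hk1 : 1 ≤ kc := by
    obtain ⟨w, hw⟩ := potent_exists_hit f hpot
    have : w ∈ Finset.univ.filter fun i : Fin (m+1) => f i.castSucc = lst :=
      Finset.mem_filter.mpr ⟨Finset.mem_univ _, hw⟩
    have := Finset.card_pos.mpr ⟨w, this⟩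
    omega
  -- split the A-product
  have hsplit : (∏ i : Fin (m+1), A (f i.castSucc) lst)
      = A lst lst ^ kc * ∏ i ∈ Finset.univ.filter
          (fun i : Fin (m+1) => f i.castSucc ≠ lst), A (f i.castSucc) lst := by
    rw [← Finset.prod_filter_mul_prod_filter_not Finset.univ
      (fun i : Fin (m+1) => f i.castSucc = lst) (fun i => A (f i.castSucc) lst)]
    congr 1
    · rw [Finset.prod_congr rfl (fun i hi => by
        rw [(Finset.mem_filter.mp hi).2] : ∀ i ∈ Finset.univ.filter
          (fun i : Fin (m+1) => f i.castSucc = lst), A (f i.castSucc) lst = A lst lst)]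
      rw [Finset.prod_const, hkc]
  rw [Finset.prod_mul_distrib, hsplit, hcount]
  have : kc + 1 - 2 = kc - 1 := by omega
  rw [this]
  have hpow : A lst lst * A lst lst ^ (kc - 1) = A lst lst ^ kc := by
    rw [← pow_succ']
    congr 1
    omega
  rw [← hpow]
  ring

lemma pLift_comp (f : Fin (m+2) → Fin (m+2)) (hf : f (Fin.last (m+1)) = Fin.last (m+1)) :
    pLift (fun i => f i.castSucc) = f := by
  funext x
  induction x using Fin.lastCases with
  | last => rw [pLift_last, hf]
  | cast i => rw [pLift_castSucc]

lemma reindex_sum (A B : Matrix (Fin (m+2)) (Fin (m+2)) K) :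
    (∑ g ∈ Finset.univ.filter (fun g : Fin (m+1) → Fin (m+2) => IsPotentG g),
      ∏ i, B i.castSucc (g i) * A (g i) (Fin.last (m+1)))
    = ∑ f ∈ Finset.univ.filter (fun f : Fin (m+2) → Fin (m+2) =>
        f (Fin.last (m+1)) = Fin.last (m+1) ∧
          ∀ i, ∃ k : ℕ, f^[k] i = Fin.last (m+1)),
      ∏ i : Fin (m+1), B i.castSucc (f i.castSucc) * A (f i.castSucc) (Fin.last (m+1)) := by
  refine Finset.sum_nbij' (fun g => pLift g) (fun f => fun i => f i.castSucc) ?_ ?_ ?_ ?_ ?_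
  · intro g hg
    have hgp : IsPotentG g := (Finset.mem_filter.mp hg).2
    exact Finset.mem_filter.mpr ⟨Finset.mem_univ _, pLift_last g, hgp⟩
  · intro f hf
    obtain ⟨-, hlast, hpot⟩ := Finset.mem_filter.mp hf
    refine Finset.mem_filter.mpr ⟨Finset.mem_univ _, ?_⟩
    unfold IsPotentG
    rw [pLift_comp f hlast]
    exact hpot
  · intro g hg
    funext i
    exact pLift_castSucc g i
  · intro f hf
    exact pLift_comp f (Finset.mem_filter.mp hf).2.1
  · intro g hg
    refine Finset.prod_congr rfl fun i _ => ?_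
    show _ = B i.castSucc (pLift g i.castSucc) * A (pLift g i.castSucc) (Fin.last (m+1))
    rw [pLift_castSucc]


lemma keyIdentity (A B : Matrix (Fin (m + 2)) (Fin (m + 2)) K) :
    A (Fin.last (m+1)) (Fin.last (m+1)) *
      (Matrix.of fun i j : Fin (m + 1) =>
        A i.castSucc j.castSucc * (B * A) i.castSucc (Fin.last (m + 1)) -
          A i.castSucc (Fin.last (m + 1)) * (B * A) i.castSucc j.castSucc).det
    = A (Fin.last (m+1)) (Fin.last (m+1)) *
      ((∑ f ∈ Finset.univ.filter (fun f : Fin (m + 2) → Fin (m + 2) =>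
          f (Fin.last (m + 1)) = Fin.last (m + 1) ∧
            ∀ i, ∃ k : ℕ, f^[k] i = Fin.last (m + 1)),
        (∏ i : Fin (m + 1), B i.castSucc (f i.castSucc)) *
          (A (Fin.last (m + 1)) (Fin.last (m + 1)) ^
              ((Finset.univ.filter fun i => f i = Fin.last (m + 1)).card - 2) *
            ∏ i ∈ Finset.univ.filter
                (fun i : Fin (m + 1) => f i.castSucc ≠ Fin.last (m + 1)),
              A (f i.castSucc) (Fin.last (m + 1)))) * A.det) := by
  rw [bridge A B, P0_eq_P A B]
  have hcore := core_det (fun j => A j (Fin.last (m+1))) (fun i j => B i.castSucc j)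
  rw [hcore, reindex_sum A B]
  rw [Finset.sum_congr rfl (fun f hf => abut_algebra A B f
    (Finset.mem_filter.mp hf).2.1 (Finset.mem_filter.mp hf).2.2)]
  rw [← Finset.mul_sum]
  ring

end DetWeightAbut

/-- For an integer `n ≥ 2` (written `n = m + 2`) and `n × n` matrices `A`, `B` over a
commutative ring `K`, writing `c_{i,j}` for the entries of `B * A`, the determinant of
the `(n-1) × (n-1)` matrix with `(i,j)`-entry `a_{i,j} c_{i,n} - a_{i,n} c_{i,j}` equals
`(∑_f (weight_f B) (abut_f A)) * det A`, where the sum ranges over all `n`-potent maps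
`f`, `weight_f B = ∏_{i=1}^{n-1} b_{i,f(i)}`, and
`abut_f A = a_{n,n} ^ (|f⁻¹(n)| - 2) * ∏_{i < n, f(i) ≠ n} a_{f(i),n}`. -/
theorem det_eq_sum_weight_abut_mul_det {K : Type*} [CommRing K] (m : ℕ)
    (A B : Matrix (Fin (m + 2)) (Fin (m + 2)) K) :
    Matrix.det (Matrix.of fun i j : Fin (m + 1) =>
      A i.castSucc j.castSucc * (B * A) i.castSucc (Fin.last (m + 1)) -
        A i.castSucc (Fin.last (m + 1)) * (B * A) i.castSucc j.castSucc) =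
    (∑ f ∈ Finset.univ.filter (fun f : Fin (m + 2) → Fin (m + 2) =>
        f (Fin.last (m + 1)) = Fin.last (m + 1) ∧
          ∀ i, ∃ k : ℕ, f^[k] i = Fin.last (m + 1)),
      (∏ i : Fin (m + 1), B i.castSucc (f i.castSucc)) *
        (A (Fin.last (m + 1)) (Fin.last (m + 1)) ^
            ((Finset.univ.filter fun i => f i = Fin.last (m + 1)).card - 2) *
          ∏ i ∈ Finset.univ.filter
              (fun i : Fin (m + 1) => f i.castSucc ≠ Fin.last (m + 1)),
            A (f i.castSucc) (Fin.last (m + 1)))) * A.det := by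
  set lst := Fin.last (m+1) with hlst
  set φ : Polynomial K →+* K := Polynomial.evalRingHom 0 with hφ
  set Ah : Matrix (Fin (m+2)) (Fin (m+2)) (Polynomial K) :=
    Matrix.of fun i j => Polynomial.C (A i j) +
      (if i = lst ∧ j = lst then Polynomial.X else 0) with hAh
  set Bh : Matrix (Fin (m+2)) (Fin (m+2)) (Polynomial K) :=
    Matrix.of fun i j => Polynomial.C (B i j) with hBh
  have hφA : ∀ a b, φ (Ah a b) = A a b := by
    intro a b
    by_cases h : a = lst ∧ b = lst
    · simp [hAh, hφ, if_pos h]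
    · simp [hAh, hφ, if_neg h]
  have hφB : ∀ a b, φ (Bh a b) = B a b := by
    intro a b; simp [hBh, hφ]
  have hAhmap : Ah.map φ = A := by
    ext a b; rw [Matrix.map_apply, hφA]
  have hBhmap : Bh.map φ = B := by
    ext a b; rw [Matrix.map_apply, hφB]
  have hBA : ∀ a b, φ ((Bh * Ah) a b) = (B * A) a b := by
    intro a b
    have h1 : (Bh * Ah).map φ = B * A := by
      rw [Matrix.map_mul, hAhmap, hBhmap]
    calc φ ((Bh * Ah) a b) = ((Bh * Ah).map φ) a b := rfl
      _ = (B * A) a b := by rw [h1]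
  have hmonic : (Ah lst lst).Monic := by
    have h1 : Ah lst lst = Polynomial.X + Polynomial.C (A lst lst) := by
      simp [hAh, add_comm]
    rw [h1]
    exact Polynomial.monic_X_add_C _
  have hKey := keyIdentity Ah Bh
  have hcancel := hmonic.isRegular.left hKey
  have hmain := congrArg φ hcancel
  -- compute LHS
  have hLHS : φ ((Matrix.of fun i j : Fin (m + 1) =>
      Ah i.castSucc j.castSucc * (Bh * Ah) i.castSucc lst -
        Ah i.castSucc lst * (Bh * Ah) i.castSucc j.castSucc).det)
      = (Matrix.of fun i j : Fin (m + 1) =>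
      A i.castSucc j.castSucc * (B * A) i.castSucc lst -
        A i.castSucc lst * (B * A) i.castSucc j.castSucc).det := by
    rw [RingHom.map_det, RingHom.mapMatrix_apply]
    congr 1
    ext i j
    simp only [Matrix.map_apply, Matrix.of_apply, map_sub, map_mul, hφA, hBA]
  -- compute RHS
  have hRHS : φ ((∑ f ∈ Finset.univ.filter (fun f : Fin (m + 2) → Fin (m + 2) =>
          f lst = lst ∧ ∀ i, ∃ k : ℕ, f^[k] i = lst),
        (∏ i : Fin (m + 1), Bh i.castSucc (f i.castSucc)) *
          (Ah lst lst ^ ((Finset.univ.filter fun i => f i = lst).card - 2) *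
            ∏ i ∈ Finset.univ.filter
                (fun i : Fin (m + 1) => f i.castSucc ≠ lst),
              Ah (f i.castSucc) lst)) * Ah.det)
      = (∑ f ∈ Finset.univ.filter (fun f : Fin (m + 2) → Fin (m + 2) =>
          f lst = lst ∧ ∀ i, ∃ k : ℕ, f^[k] i = lst),
        (∏ i : Fin (m + 1), B i.castSucc (f i.castSucc)) *
          (A lst lst ^ ((Finset.univ.filter fun i => f i = lst).card - 2) *
            ∏ i ∈ Finset.univ.filter
                (fun i : Fin (m + 1) => f i.castSucc ≠ lst),
              A (f i.castSucc) lst)) * A.det := by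
    rw [map_mul, RingHom.map_det, RingHom.mapMatrix_apply, hAhmap, map_sum]
    congr 1
    refine Finset.sum_congr rfl fun f hf => ?_
    rw [map_mul, map_mul, map_pow, map_prod, map_prod]
    congr 1
    · exact Finset.prod_congr rfl fun i _ => hφB _ _
    congr 1
    · rw [hφA]
    · exact Finset.prod_congr rfl fun i _ => hφA _ _
  rw [hLHS, hRHS] at hmain
  exact hmain
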